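/- Rational solution with a pole at x = −a: Let a ∈ ℝ. On the open set where x + a ≠ 0, define u(x,t) = −2/(x+a)² and y(x,t) = 2(12t + a)/(x+a)² − 2(x+a). Then (u,y) satisfies both equations of system (Dx) and both equations of system (Dt), and the first integrals take the values H0 = 2y y_xx − y_x² + 4u y² = −36 and H1 = 2z z_xx − z_x² + 4(u−1)z² = −16a², where z = 12tu + 2x + y. -/

import Mathlib

/-- Partial derivative in the first (space) variable. -/
noncomputable def dx (f : ℝ → ℝ → ℝ) : ℝ → ℝ → ℝ := fun x t => deriv (fun x' => f x' t) x

/-- Partial derivative in the second (time) variable. -/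
noncomputable def dt (f : ℝ → ℝ → ℝ) : ℝ → ℝ → ℝ := fun x t => deriv (fun t' => f x t') t

/-- The KdV equation `u_t = u_xxx + 6 u u_x`. -/
def KdV (u : ℝ → ℝ → ℝ) : Prop :=
  ∀ x t, dt u x t = dx (dx (dx u)) x t + 6 * u x t * dx u x t

/-- `v` is the potential of `u`: `v_x = u`, `v_t = u_xx + 3 u²`. -/
def Potential (u v : ℝ → ℝ → ℝ) : Prop :=
  ∀ x t, dx v x t = u x t ∧ dt v x t = dx (dx u) x t + 3 * (u x t) ^ 2

/-- Equation (eqt): the stationary equation for the linear combination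
`u_{τ5} + k1 u_{τ3} + k2 u_{τ1}` of nonautonomous symmetries of KdV. -/
def Eqt (k1 k2 : ℝ) (u v : ℝ → ℝ → ℝ) : Prop :=
  ∀ x t,
    3 * t * dx (fun x t => dx (dx (dx (dx u))) x t + 10 * u x t * dx (dx u) x t
        + 5 * (dx u x t) ^ 2 + 10 * (u x t) ^ 3) x t
    + x * dx (fun x t => dx (dx u) x t + 3 * (u x t) ^ 2) x t
    + 4 * dx (dx u) x t + 8 * (u x t) ^ 2 + 2 * dx u x t * v x t
    + k1 * (3 * t * dx (fun x t => dx (dx u) x t + 3 * (u x t) ^ 2) x t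
        + x * dx u x t + 2 * u x t)
    + k2 * (6 * t * dx u x t + 1) = 0

/-- Pointwise form of system (Dx): the stationary equation and the equation for `y`. -/
def DxEqAt (u y : ℝ → ℝ → ℝ) (x t : ℝ) : Prop :=
  3 * t * (dx (dx (dx u)) x t + 6 * u x t * dx u x t - 4 * dx u x t)
      + x * dx u x t + 2 * u x t - dx y x t - 2 = 0 ∧
  dx (dx (dx y)) x t + 4 * u x t * dx y x t + 2 * dx u x t * y x t = 0

/-- Pointwise form of system (Dt): the KdV flow for `u` and the induced flow for `y`. -/
def DtEqAt (u y : ℝ → ℝ → ℝ) (x t : ℝ) : Prop :=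
  dt u x t = dx (dx (dx u)) x t + 6 * u x t * dx u x t ∧
  dt y x t = 2 * u x t * dx y x t - 2 * dx u x t * y x t

/-- The first integral `H0 = 2 y y_xx - y_x² + 4 u y²`. -/
noncomputable def H0expr (u y : ℝ → ℝ → ℝ) : ℝ → ℝ → ℝ := fun x t =>
  2 * y x t * dx (dx y) x t - (dx y x t) ^ 2 + 4 * u x t * (y x t) ^ 2

/-- The function `z = 12 t u + 2 x + y`. -/
noncomputable def zfun (u y : ℝ → ℝ → ℝ) : ℝ → ℝ → ℝ := fun x t =>
  12 * t * u x t + 2 * x + y x t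

/-- The first integral `H1 = 2 z z_xx - z_x² + 4 (u - 1) z²` with `z = 12 t u + 2 x + y`. -/
noncomputable def H1expr (u y : ℝ → ℝ → ℝ) : ℝ → ℝ → ℝ := fun x t =>
  2 * zfun u y x t * dx (dx (zfun u y)) x t - (dx (zfun u y) x t) ^ 2
    + 4 * (u x t - 1) * (zfun u y x t) ^ 2

/-- The rational solution `u = -2/(x+a)²`, `y = 2(12t+a)/(x+a)² - 2(x+a)` on the
set `x + a ≠ 0` solves systems (Dx), (Dt), with `H0 = -36` and `H1 = -16a²`. -/
lemma hasDerivAt_aux (a c : ℝ) (n : ℕ) {x : ℝ} (h : x + a ≠ 0) :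
    HasDerivAt (fun x : ℝ => c / (x + a) ^ n) (-(n : ℝ) * c / (x + a) ^ (n + 1)) x := by
  have h1 : HasDerivAt (fun x : ℝ => x + a) 1 x := (hasDerivAt_id x).add_const a
  have h2 : HasDerivAt (fun x : ℝ => (x + a) ^ n) _ x := h1.pow n
  have h3 : HasDerivAt (fun x : ℝ => c / (x + a) ^ n) _ x :=
    (hasDerivAt_const x c).div h2 (pow_ne_zero n h)
  convert h3 using 1
  cases n with
  | zero => simp
  | succ m =>
    simp only [Nat.add_sub_cancel]
    field_simp
    ring

lemma deriv_congr_aux (a : ℝ) {x : ℝ} (h : x + a ≠ 0) {f g : ℝ → ℝ}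
    (hfg : ∀ x', x' + a ≠ 0 → f x' = g x') : deriv f x = deriv g x := by
  apply Filter.EventuallyEq.deriv_eq
  have hopen : IsOpen {x' : ℝ | x' + a ≠ 0} :=
    isOpen_compl_singleton.preimage (continuous_id.add continuous_const)
  filter_upwards [hopen.mem_nhds h] with x' hx' using hfg x' hx'

section formulas
variable (a t : ℝ)

noncomputable abbrev Ufun : ℝ → ℝ → ℝ := fun x _ => -2 / (x + a) ^ 2
noncomputable abbrev Yfun : ℝ → ℝ → ℝ := fun x t => 2 * (12 * t + a) / (x + a) ^ 2 - 2 * (x + a)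

lemma U1 : ∀ x : ℝ, x + a ≠ 0 → dx (Ufun a) x t = 4 / (x + a) ^ 3 := by
  intro x h
  show deriv (fun x' => -2 / (x' + a) ^ 2) x = _
  rw [(hasDerivAt_aux a (-2) 2 h).deriv]
  norm_num

lemma U2 : ∀ x : ℝ, x + a ≠ 0 → dx (dx (Ufun a)) x t = -12 / (x + a) ^ 4 := by
  intro x h
  show deriv (fun x' => dx (Ufun a) x' t) x = _
  rw [deriv_congr_aux a h (fun x' h' => U1 a t x' h')]
  rw [(hasDerivAt_aux a 4 3 h).deriv]
  norm_num

lemma U3 : ∀ x : ℝ, x + a ≠ 0 → dx (dx (dx (Ufun a))) x t = 48 / (x + a) ^ 5 := by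
  intro x h
  show deriv (fun x' => dx (dx (Ufun a)) x' t) x = _
  rw [deriv_congr_aux a h (fun x' h' => U2 a t x' h')]
  rw [(hasDerivAt_aux a (-12) 4 h).deriv]
  norm_num

lemma hasDerivAt_Y {x : ℝ} (h : x + a ≠ 0) :
    HasDerivAt (fun x' => Yfun a x' t)
      (-2 * (2 * (12 * t + a)) / (x + a) ^ 3 - 2) x := by
  have h1 : HasDerivAt (fun x' : ℝ => 2 * (x' + a)) 2 x := by
    simpa using ((hasDerivAt_id x).add_const a).const_mul 2
  have h2 : HasDerivAt (fun x' => Yfun a x' t) _ x :=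
    (hasDerivAt_aux a (2 * (12 * t + a)) 2 h).sub h1
  convert h2 using 1
  norm_num

lemma Y1 : ∀ x : ℝ, x + a ≠ 0 →
    dx (Yfun a) x t = -2 * (2 * (12 * t + a)) / (x + a) ^ 3 - 2 := by
  intro x h
  exact (hasDerivAt_Y a t h).deriv

lemma Y2 : ∀ x : ℝ, x + a ≠ 0 →
    dx (dx (Yfun a)) x t = 6 * (2 * (12 * t + a)) / (x + a) ^ 4 := by
  intro x h
  show deriv (fun x' => dx (Yfun a) x' t) x = _
  rw [deriv_congr_aux a h (fun x' h' => Y1 a t x' h')]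
  have h1 := ((hasDerivAt_aux a (-2 * (2 * (12 * t + a))) 3 h).sub_const 2).deriv
  rw [show (fun x' : ℝ => -2 * (2 * (12 * t + a)) / (x' + a) ^ 3 - 2)
      = fun x' : ℝ => (fun x'' : ℝ => -2 * (2 * (12 * t + a)) / (x'' + a) ^ 3) x' - 2 from rfl,
    h1]
  ring

lemma Y3 : ∀ x : ℝ, x + a ≠ 0 →
    dx (dx (dx (Yfun a))) x t = -24 * (2 * (12 * t + a)) / (x + a) ^ 5 := by
  intro x h
  show deriv (fun x' => dx (dx (Yfun a)) x' t) x = _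
  rw [deriv_congr_aux a h (fun x' h' => Y2 a t x' h')]
  rw [(hasDerivAt_aux a (6 * (2 * (12 * t + a))) 4 h).deriv]
  ring

lemma UT : ∀ x : ℝ, dt (Ufun a) x t = 0 := by
  intro x
  show deriv (fun _ : ℝ => -2 / (x + a) ^ 2) t = 0
  exact deriv_const _ _

lemma YT : ∀ x : ℝ, x + a ≠ 0 → dt (Yfun a) x t = 24 / (x + a) ^ 2 := by
  intro x h
  show deriv (fun t' => 2 * (12 * t' + a) / (x + a) ^ 2 - 2 * (x + a)) t = _
  have h1 : HasDerivAt (fun t' : ℝ => 2 * (12 * t' + a) / (x + a) ^ 2 - 2 * (x + a))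
      (24 / (x + a) ^ 2) t := by
    have : HasDerivAt (fun t' : ℝ => 12 * t' + a) 12 t := by
      simpa using ((hasDerivAt_id t).const_mul 12).add_const a
    have : HasDerivAt (fun t' : ℝ => 2 * (12 * t' + a) / (x + a) ^ 2 - 2 * (x + a)) _ t :=
      ((this.const_mul 2).div_const ((x + a) ^ 2)).sub_const (2 * (x + a))
    convert this using 1
    ring
  exact h1.deriv
end formulas
section zformulas
variable (a t : ℝ)

lemma ZV : ∀ x : ℝ, x + a ≠ 0 →
    zfun (Ufun a) (Yfun a) x t = 2 * a / (x + a) ^ 2 - 2 * a := by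
  intro x h
  simp only [zfun, Ufun, Yfun]
  field_simp
  ring

lemma Z1 : ∀ x : ℝ, x + a ≠ 0 →
    dx (zfun (Ufun a) (Yfun a)) x t = -4 * a / (x + a) ^ 3 := by
  intro x h
  show deriv (fun x' => zfun (Ufun a) (Yfun a) x' t) x = _
  rw [deriv_congr_aux a h (fun x' h' => ZV a t x' h')]
  rw [((hasDerivAt_aux a (2 * a) 2 h).sub_const (2 * a)).deriv]
  ring

lemma Z2 : ∀ x : ℝ, x + a ≠ 0 →
    dx (dx (zfun (Ufun a) (Yfun a))) x t = 12 * a / (x + a) ^ 4 := by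
  intro x h
  show deriv (fun x' => dx (zfun (Ufun a) (Yfun a)) x' t) x = _
  rw [deriv_congr_aux a h (fun x' h' => Z1 a t x' h')]
  rw [(hasDerivAt_aux a (-4 * a) 3 h).deriv]
  ring

end zformulas


theorem rational_solution (a : ℝ) :
    ∀ x t : ℝ, x + a ≠ 0 →
      DxEqAt (fun x _ => -2 / (x + a) ^ 2)
        (fun x t => 2 * (12 * t + a) / (x + a) ^ 2 - 2 * (x + a)) x t ∧
      DtEqAt (fun x _ => -2 / (x + a) ^ 2)
        (fun x t => 2 * (12 * t + a) / (x + a) ^ 2 - 2 * (x + a)) x t ∧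
      H0expr (fun x _ => -2 / (x + a) ^ 2)
        (fun x t => 2 * (12 * t + a) / (x + a) ^ 2 - 2 * (x + a)) x t = -36 ∧
      H1expr (fun x _ => -2 / (x + a) ^ 2)
        (fun x t => 2 * (12 * t + a) / (x + a) ^ 2 - 2 * (x + a)) x t = -16 * a ^ 2 := by
  intro x t hx
  rw [show (fun x (_ : ℝ) => -2 / (x + a) ^ 2) = Ufun a from rfl,
    show (fun x t : ℝ => 2 * (12 * t + a) / (x + a) ^ 2 - 2 * (x + a)) = Yfun a from rfl]
  simp only [DxEqAt, DtEqAt, H0expr, H1expr]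
  rw [U1 a t x hx, U3 a t x hx, Y1 a t x hx, Y2 a t x hx, Y3 a t x hx,
    UT a t x, YT a t x hx, Z1 a t x hx, Z2 a t x hx, ZV a t x hx]
  simp only [Ufun, Yfun]
  refine ⟨⟨?_, ?_⟩, ⟨?_, ?_⟩, ?_, ?_⟩ <;> (field_simp; ring)
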